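/- Let m ≥ 1 and t ≥ 0 be integers and let ρ be a real number. Then Σ_a ρ^{N₁(a)} (1−ρ)^{N₀(a)} = Σ_{j=1}^{t+1} (j/(t+1)) · C((m+1)(t+1), t+1−j) · ρ^{t+1−j} (1−ρ)^{m(t+1)+j}, where the left-hand sum ranges over all m-admissible words a of length (m+1)(t+1) over {0,1}, N₁(a) and N₀(a) denote the number of ones and zeros in a respectively, and C denotes the binomial coefficient. -/

import Mathlib

open scoped Classical

/-- The contribution of a letter: `0 ↦ +1`, `1 ↦ -m`. -/
def xiVal (m : ℕ) (b : Bool) : ℤ := if b then -(m : ℤ) else 1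

/-- A word over `{0,1}` is `m`-admissible if every nonempty partial sum of the
values `ξ(0)=1`, `ξ(1)=-m` is strictly positive. -/
def mAdmissible (m : ℕ) (w : List Bool) : Prop :=
  ∀ k, 1 ≤ k → k ≤ w.length → 0 < ((w.take k).map (xiVal m)).sum

open Finset

set_option maxHeartbeats 1000000 in
lemma ladder_count (n : ℕ) (hn : 0 < n) (s : ℤ) (hs : 0 < s) (F : ℕ → ℤ)
    (h1 : ∀ j, F (j + 1) ≤ F j + 1)
    (hper : ∀ j, F (j + n) = F j + s) :
    (((Finset.range n)).filter (fun r => ∀ j, r < j → F r < F j)).card = s.toNat := by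
  classical
  -- multiples of the period
  have hmul : ∀ j q : ℕ, F (j + q * n) = F j + q * s := by
    intro j q
    induction q with
    | zero => simp
    | succ q ih =>
      have : j + (q + 1) * n = (j + q * n) + n := by ring
      rw [this, hper, ih]; push_cast; ring
  have hdecomp : ∀ j : ℕ, F j = F (j % n) + (j / n : ℕ) * s := by
    intro j
    conv_lhs => rw [show j = j % n + (j / n) * n from (Nat.mod_add_div' j n).symm]
    exact hmul _ _
  -- the minimum over one period
  obtain ⟨j₀, hj₀mem, hj₀⟩ :
      ∃ j₀ ∈ Finset.range n, ∀ j ∈ Finset.range n, F j₀ ≤ F j :=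
    Finset.exists_min_image _ F ⟨0, Finset.mem_range.2 hn⟩
  set μ := F j₀ with hμ
  have hj₀n : j₀ < n := Finset.mem_range.1 hj₀mem
  have hmin : ∀ j, μ ≤ F j := by
    intro j
    have h1' : μ ≤ F (j % n) := hj₀ _ (Finset.mem_range.2 (Nat.mod_lt _ hn))
    have h2' : (0:ℤ) ≤ (j / n : ℕ) * s := by positivity
    rw [hdecomp j]; omega
  -- the last-passage function
  set B : ℤ → ℕ := fun v => n * ((v - μ).toNat + 1) with hB
  have hbound : ∀ v : ℤ, ∀ j : ℕ, F j ≤ v → j ≤ B v := by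
    intro v j hj
    have hq : ((j / n : ℕ) : ℤ) * s ≤ v - μ := by
      have := hmin (j % n); rw [hdecomp j] at hj; omega
    have hq1 : ((j / n : ℕ) : ℤ) ≤ v - μ := by
      nlinarith [Int.natCast_nonneg (j / n)]
    have hq2 : j / n ≤ (v - μ).toNat := by omega
    have := Nat.mod_add_div' j n
    have hjm : j % n < n := Nat.mod_lt _ hn
    calc j = j % n + (j / n) * n := (Nat.mod_add_div' j n).symm
      _ ≤ n * ((v - μ).toNat + 1) := by nlinarith
  set g : ℤ → ℕ := fun v => Nat.findGreatest (fun j => F j ≤ v) (B v) with hg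
  have hg_le : ∀ v : ℤ, μ ≤ v → F (g v) ≤ v := by
    intro v hv
    simp only [hg]
    exact Nat.findGreatest_spec (P := fun j => F j ≤ v) (hbound v j₀ hv) hv
  have hg_ge : ∀ v : ℤ, ∀ j : ℕ, F j ≤ v → j ≤ g v := by
    intro v j hj
    simp only [hg]
    exact Nat.le_findGreatest (P := fun j => F j ≤ v) (hbound v j hj) hj
  have hg_gt : ∀ v : ℤ, ∀ j : ℕ, g v < j → v < F j := by
    intro v j hj
    by_contra h
    exact absurd (hg_ge v j (by omega)) (by omega)
  have hg_eq : ∀ v : ℤ, μ ≤ v → F (g v) = v := by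
    intro v hv
    have h2 := hg_gt v (g v + 1) (by omega)
    have h3 := h1 (g v)
    have := hg_le v hv
    omega
  -- ladder predicate
  set L : ℕ → Prop := fun r => ∀ j, r < j → F r < F j with hL
  have hgL : ∀ v : ℤ, μ ≤ v → L (g v) := by
    intro v hv j hj
    have := hg_gt v j hj
    have := hg_le v hv
    omega
  have hgLn : ∀ v : ℤ, μ ≤ v → v < μ + s → g v < n := by
    intro v hv hvs
    by_contra h
    push_neg at h
    have h2 : F (g v - n + n) = F (g v - n) + s := hper _
    rw [show g v - n + n = g v from by omega] at h2
    have := hg_le v hv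
    have := hmin (g v - n)
    omega
  have hLg : ∀ r : ℕ, L r → g (F r) = r := by
    intro r hr
    have h1' : r ≤ g (F r) := hg_ge _ r le_rfl
    rcases Nat.lt_or_ge r (g (F r)) with h | h
    · have := hr _ h
      have := hg_le (F r) (hmin r)
      omega
    · omega
  have hLlt : ∀ r : ℕ, r < n → L r → F r < μ + s := by
    intro r hrn hr
    have : F (j₀ + n) = μ + s := by rw [hper]
    have := hr (j₀ + n) (by omega)
    omega
  -- the bijection
  have hcard : (Finset.Ico μ (μ + s)).card = s.toNat := by
    rw [Int.card_Ico]; congr 1; ring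
  rw [← hcard]
  symm
  apply Finset.card_bij' (fun v _ => g v)
    (fun r _ => F r)
  · intro v hv
    simp only [Finset.mem_Ico] at hv
    simp only [Finset.mem_filter, Finset.mem_range]
    exact ⟨hgLn v hv.1 hv.2, hgL v hv.1⟩
  · intro r hr
    simp only [Finset.mem_filter, Finset.mem_range] at hr
    simp only [Finset.mem_Ico]
    exact ⟨hmin r, hLlt r hr.1 hr.2⟩
  · intro v hv
    simp only [Finset.mem_Ico] at hv
    exact hg_eq v hv.1
  · intro r hr
    simp only [Finset.mem_filter] at hr
    exact hLg r hr.2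

lemma cycle_word (m n : ℕ) (hn : 0 < n) (w : Fin n → Bool)
    (hs : 0 < (∑ i : Fin n, xiVal m (w i))) :
    (Finset.univ.filter (fun r : Fin n =>
        mAdmissible m (List.ofFn (fun i => w (r + i))))).card
      = (∑ i : Fin n, xiVal m (w i)).toNat := by
  classical
  set W : ℕ → ℤ := fun i => xiVal m (w ⟨i % n, Nat.mod_lt i hn⟩) with hWdef
  set F : ℕ → ℤ := fun k => ∑ i ∈ Finset.range k, W i with hFdef
  have hW1 : ∀ i, W i ≤ 1 := by
    intro i
    simp only [hWdef, xiVal]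
    split <;> omega
  have hWper : ∀ i, W (i + n) = W i := by
    intro i
    simp only [hWdef, Nat.add_mod_right]
  have hFsucc : ∀ k, F (k + 1) = F k + W k := by
    intro k
    simp only [hFdef, Finset.sum_range_succ]
  have h1 : ∀ j, F (j + 1) ≤ F j + 1 := by
    intro j; have := hW1 j; rw [hFsucc]; omega
  have hWval : ∀ i : Fin n, W i.val = xiVal m (w i) := by
    intro i
    simp only [hWdef]
    congr 1
    exact congrArg w (Fin.ext (by simp [Nat.mod_eq_of_lt i.isLt]))
  have hFn : F n = ∑ i : Fin n, xiVal m (w i) := by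
    rw [show F n = ∑ i ∈ Finset.range n, W i from rfl, ← Fin.sum_univ_eq_sum_range W n]
    exact Finset.sum_congr rfl (fun i _ => hWval i)
  set s : ℤ := ∑ i : Fin n, xiVal m (w i) with hsdef
  have hper : ∀ j, F (j + n) = F j + s := by
    intro j
    induction j with
    | zero => simpa [hFdef] using hFn
    | succ j ih =>
      have e1 : j + 1 + n = (j + n) + 1 := by omega
      rw [e1, hFsucc, ih, hFsucc, hWper]
      ring
  have hmul : ∀ j q : ℕ, F (j + q * n) = F j + q * s := by
    intro j q
    induction q with
    | zero => simp
    | succ q ih =>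
      have : j + (q + 1) * n = (j + q * n) + n := by ring
      rw [this, hper, ih]; push_cast; ring
  -- prefix sums of the shifted word
  have hpre : ∀ (r : Fin n) (k : ℕ), k ≤ n →
      (((List.ofFn (fun i => w (r + i))).take k).map (xiVal m)).sum
        = F (r.val + k) - F r.val := by
    intro r k hk
    induction k with
    | zero => simp
    | succ k ih =>
      have hk' : k ≤ n := by omega
      have hkn : k < n := by omega
      rw [List.take_succ, List.map_append, List.sum_append, ih hk']
      have hget : (List.ofFn (fun i => w (r + i)))[k]? = some (w (r + ⟨k, hkn⟩)) := by
        simp [List.getElem?_ofFn, hkn]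
      rw [hget]
      simp only [Option.toList_some, List.map_cons, List.map_nil, List.sum_cons,
        List.sum_nil, add_zero]
      have hval : xiVal m (w (r + ⟨k, hkn⟩)) = W (r.val + k) := by
        have he : r + (⟨k, hkn⟩ : Fin n) = (⟨(r.val + k) % n, Nat.mod_lt _ hn⟩ : Fin n) := by
          apply Fin.ext; simp [Fin.add_def]
        rw [he]
      rw [hval, show r.val + (k + 1) = (r.val + k) + 1 from rfl, hFsucc]
      ring
  -- admissibility of the shift ↔ ladder point
  have hadm : ∀ r : Fin n,
      mAdmissible m (List.ofFn (fun i => w (r + i))) ↔ ∀ j, r.val < j → F r.val < F j := by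
    intro r
    constructor
    · intro h j hj
      set d := j - r.val - 1 with hd
      have h2 : d % n < n := Nat.mod_lt d hn
      have h' := h (d % n + 1) (by omega) (by simpa using (show d % n + 1 ≤ n by omega))
      rw [hpre r (d % n + 1) (by omega)] at h'
      have hj' : j = (r.val + (d % n + 1)) + d / n * n := by
        have h3 := Nat.mod_add_div' d n
        omega
      rw [hj', hmul]
      have h4 : (0:ℤ) ≤ (d / n : ℕ) * s := by positivity
      omega
    · intro h k hk1 hkn
      have hkn' : k ≤ n := by simpa using hkn
      rw [hpre r k hkn']
      have := h (r.val + k) (by omega)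
      omega
  -- transfer to range n and apply ladder_count
  have hcard : (Finset.univ.filter (fun r : Fin n =>
      mAdmissible m (List.ofFn (fun i => w (r + i))))).card
      = ((Finset.range n).filter (fun r => ∀ j, r < j → F r < F j)).card := by
    refine Finset.card_bij' (fun r _ => r.val)
      (fun j hj => (⟨j, Finset.mem_range.1 (Finset.mem_filter.1 hj).1⟩ : Fin n))
      ?_ ?_ ?_ ?_
    · intro r hr
      simp only [Finset.mem_filter, Finset.mem_univ, true_and] at hr
      simp only [Finset.mem_filter, Finset.mem_range]
      exact ⟨r.isLt, (hadm r).1 hr⟩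
    · intro j hj
      simp only [Finset.mem_filter, Finset.mem_univ, true_and]
      have hj2 := (Finset.mem_filter.1 hj).2
      exact (hadm _).2 hj2
    · intro r hr; rfl
    · intro j hj; rfl
  rw [hcard]
  exact ladder_count n hn s hs F h1 hper

section
variable {n : ℕ} [NeZero n]

/-- number of ones -/
noncomputable def onesC (w : Fin n → Bool) : ℕ :=
  (Finset.univ.filter (fun i => w i = true)).card

lemma sum_xi (m : ℕ) (w : Fin n → Bool) :
    ∑ i : Fin n, xiVal m (w i) = (n : ℤ) - (m + 1) * onesC w := by
  have hsplit : ∑ i : Fin n, xiVal m (w i)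
      = ∑ i ∈ Finset.univ.filter (fun i => w i = true), xiVal m (w i)
        + ∑ i ∈ Finset.univ.filter (fun i => ¬ (w i = true)), xiVal m (w i) :=
    (Finset.sum_filter_add_sum_filter_not _ _ _).symm
  have h1 : ∑ i ∈ Finset.univ.filter (fun i => w i = true), xiVal m (w i)
      = (onesC w : ℤ) * (-(m:ℤ)) := by
    rw [Finset.sum_congr rfl (fun i hi => ?_), Finset.sum_const, onesC, nsmul_eq_mul]
    have := (Finset.mem_filter.1 hi).2
    simp [xiVal, this]
  have h2 : ∑ i ∈ Finset.univ.filter (fun i => ¬ (w i = true)), xiVal m (w i)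
      = ((n - onesC w : ℕ) : ℤ) * 1 := by
    rw [Finset.sum_congr rfl (fun i hi => ?_), Finset.sum_const, nsmul_eq_mul]
    · congr 2
      rw [Finset.filter_not, Finset.card_sdiff_of_subset (Finset.filter_subset _ _)]
      simp [onesC]
    · have := (Finset.mem_filter.1 hi).2
      simp only [Bool.not_eq_true] at this
      simp [xiVal, this]
  have honemax : onesC w ≤ n := by
    simpa [onesC] using (Finset.card_filter_le Finset.univ (fun i => w i = true)).trans_eq
      (by simp)
  rw [hsplit, h1, h2]
  push_cast [honemax]
  ring

lemma zeros_card (w : Fin n → Bool) :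
    (Finset.univ.filter (fun i => w i = false)).card = n - onesC w := by
  have : (Finset.univ.filter (fun i => w i = false))
      = (Finset.univ.filter (fun i => ¬ (w i = true))) := by
    apply Finset.filter_congr
    intro i _
    simp
  rw [this, Finset.filter_not, Finset.card_sdiff_of_subset (Finset.filter_subset _ _)]
  simp [onesC]

lemma ones_le (w : Fin n → Bool) : onesC w ≤ n := by
  simpa [onesC] using (Finset.card_filter_le Finset.univ (fun i => w i = true)).trans_eq (by simp)

lemma shift_ones (w : Fin n → Bool) (r : Fin n) :
    onesC (fun i => w (r + i)) = onesC w := by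
  unfold onesC
  refine Finset.card_bij' (fun a _ => r + a) (fun b _ => -r + b) ?_ ?_ ?_ ?_
  · intro a ha
    simp only [Finset.mem_filter, Finset.mem_univ, true_and] at ha ⊢
    exact ha
  · intro b hb
    simp only [Finset.mem_filter, Finset.mem_univ, true_and] at hb ⊢
    rw [add_neg_cancel_left]
    exact hb
  · intro a _; exact neg_add_cancel_left r a
  · intro b _; exact add_neg_cancel_left r b

lemma card_ones_eq (k : ℕ) :
    (Finset.univ.filter (fun w : Fin n → Bool => onesC w = k)).card
      = Nat.choose n k := by
  have h : (Finset.univ.filter (fun w : Fin n → Bool => onesC w = k)).card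
      = (Finset.powersetCard k (Finset.univ : Finset (Fin n))).card := by
    refine Finset.card_bij' (fun w _ => Finset.univ.filter (fun i => w i = true))
      (fun A _ => fun i => if i ∈ A then true else false) ?_ ?_ ?_ ?_
    · intro w hw
      simp only [Finset.mem_filter, Finset.mem_univ, true_and] at hw
      rw [Finset.mem_powersetCard]
      exact ⟨Finset.subset_univ _, hw⟩
    · intro A hA
      rw [Finset.mem_powersetCard] at hA
      simp only [Finset.mem_filter, Finset.mem_univ, true_and, onesC]
      rw [← hA.2]
      refine Finset.mem_filter.2 ⟨Finset.mem_univ _, ?_⟩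
      congr 1
      ext i
      simp
    · intro w _
      funext i
      by_cases h : w i = true <;> simp [h]
    · intro A _
      ext i
      simp
  rw [h, Finset.card_powersetCard, Finset.card_univ, Fintype.card_fin]

lemma count_empty (m k : ℕ) (hk : n ≤ (m + 1) * k) :
    ((Finset.univ.filter (fun w : Fin n → Bool => onesC w = k)).filter
      (fun w => mAdmissible m (List.ofFn w))) = ∅ := by
  rw [Finset.eq_empty_iff_forall_notMem]
  intro w hw
  simp only [Finset.mem_filter, Finset.mem_univ, true_and] at hw
  obtain ⟨hones, hadm⟩ := hw
  have hn : 0 < n := Nat.pos_of_ne_zero (NeZero.ne n)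
  have h := hadm n (by omega) (by simp)
  have ht : (List.ofFn w).take n = List.ofFn w := by
    apply List.take_of_length_le
    simp
  rw [ht, List.map_ofFn, List.sum_ofFn] at h
  have h2 : ∑ i : Fin n, (xiVal m ∘ w) i = ∑ i : Fin n, xiVal m (w i) := rfl
  rw [h2, sum_xi, hones] at h
  have : ((m:ℤ) + 1) * k ≥ n := by exact_mod_cast hk
  omega

lemma count_k (m k : ℕ) (hk : (m + 1) * k < n) :
    n * ((Finset.univ.filter (fun w : Fin n → Bool => onesC w = k)).filter
        (fun w => mAdmissible m (List.ofFn w))).card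
      = (n - (m + 1) * k) * Nat.choose n k := by
  have hn : 0 < n := Nat.pos_of_ne_zero (NeZero.ne n)
  set S := Finset.univ.filter (fun w : Fin n → Bool => onesC w = k) with hS
  set A := S.filter (fun w => mAdmissible m (List.ofFn w)) with hA
  -- shifting是bijection on S preserving admissibility of the shifted word
  have claim1 : ∀ r : Fin n,
      (S.filter (fun w => mAdmissible m (List.ofFn (fun i => w (r + i))))).card
        = A.card := by
    intro r
    refine Finset.card_bij' (fun w _ => (fun i => w (r + i)))
      (fun v _ => (fun i => v (-r + i))) ?_ ?_ ?_ ?_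
    · intro w hw
      simp only [hA, hS, Finset.mem_filter, Finset.mem_univ, true_and] at hw ⊢
      exact ⟨(shift_ones w r).trans hw.1, hw.2⟩
    · intro v hv
      simp only [hA, hS, Finset.mem_filter, Finset.mem_univ, true_and] at hv ⊢
      constructor
      · exact (shift_ones v (-r)).trans hv.1
      · have he : (List.ofFn fun i => v (-r + (r + i))) = List.ofFn v := by
          congr 1
          funext i
          rw [neg_add_cancel_left]
        rw [he]
        exact hv.2
    · intro w _
      funext i
      simp only []
      rw [add_neg_cancel_left]
    · intro v _
      funext i
      simp only []
      rw [neg_add_cancel_left]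
  have claim2 : ∑ r : Fin n,
      (S.filter (fun w => mAdmissible m (List.ofFn (fun i => w (r + i))))).card
      = ∑ w ∈ S, (Finset.univ.filter (fun r : Fin n =>
          mAdmissible m (List.ofFn (fun i => w (r + i))))).card := by
    simp only [Finset.card_filter]
    rw [Finset.sum_comm]
  have claim3 : ∀ w ∈ S, (Finset.univ.filter (fun r : Fin n =>
      mAdmissible m (List.ofFn (fun i => w (r + i))))).card = n - (m + 1) * k := by
    intro w hw
    simp only [hS, Finset.mem_filter, Finset.mem_univ, true_and] at hw
    obtain ⟨K, hKdef⟩ : ∃ K, (m + 1) * k = K := ⟨_, rfl⟩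
    have hKZ : ((m:ℤ) + 1) * (k:ℤ) = (K:ℤ) := by rw [← hKdef]; push_cast; ring
    have hKn : K < n := hKdef ▸ hk
    have hsx : ∑ i : Fin n, xiVal m (w i) = (n:ℤ) - K := by
      rw [sum_xi]
      rw [hw]
      rw [hKZ]
    have hs : 0 < ∑ i : Fin n, xiVal m (w i) := by
      rw [hsx]
      exact sub_pos.2 (by exact_mod_cast hKn)
    have hcw := cycle_word m n hn w hs
    rw [hsx] at hcw
    rw [hKdef]
    rw [hcw, ← Nat.cast_sub hKn.le, Int.toNat_natCast]
  calc n * A.card = ∑ _r : Fin n, A.card := by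
        rw [Finset.sum_const, Finset.card_univ, Fintype.card_fin, smul_eq_mul]
    _ = ∑ r : Fin n, (S.filter (fun w =>
          mAdmissible m (List.ofFn (fun i => w (r + i))))).card := by
        exact (Finset.sum_congr rfl (fun r _ => (claim1 r).symm))
    _ = ∑ w ∈ S, (Finset.univ.filter (fun r : Fin n =>
          mAdmissible m (List.ofFn (fun i => w (r + i))))).card := claim2
    _ = ∑ w ∈ S, (n - (m + 1) * k) := Finset.sum_congr rfl claim3
    _ = S.card * (n - (m + 1) * k) := by rw [Finset.sum_const, smul_eq_mul]
    _ = (n - (m + 1) * k) * Nat.choose n k := by rw [hS, card_ones_eq, mul_comm]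

end

set_option maxHeartbeats 1000000 in
/-- Summing `ρ^{N₁(a)}(1−ρ)^{N₀(a)}` over all `m`-admissible words `a` of
length `(m+1)(t+1)` gives the closed formula for `P_t(0^{m+1})`. -/
theorem sum_over_mAdmissible (m t : ℕ) (hm : 1 ≤ m) (ρ : ℝ) :
    (∑ w ∈ Finset.univ.filter
        (fun w : Fin ((m + 1) * (t + 1)) → Bool => mAdmissible m (List.ofFn w)),
      ρ ^ (Finset.univ.filter (fun i => w i = true)).card *
        (1 - ρ) ^ (Finset.univ.filter (fun i => w i = false)).card)
    = ∑ j ∈ Finset.Icc 1 (t + 1),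
        (j : ℝ) / (t + 1) * (Nat.choose ((m + 1) * (t + 1)) (t + 1 - j) : ℝ) *
          ρ ^ (t + 1 - j) * (1 - ρ) ^ (m * (t + 1) + j) := by
  classical
  have hnpos : 0 < (m + 1) * (t + 1) := by positivity
  haveI : NeZero ((m + 1) * (t + 1)) := ⟨hnpos.ne'⟩
  set n := (m + 1) * (t + 1) with hndef
  -- Step 1: rewrite the summand in terms of onesC
  have step1 : (∑ w ∈ Finset.univ.filter
        (fun w : Fin n → Bool => mAdmissible m (List.ofFn w)),
      ρ ^ (Finset.univ.filter (fun i => w i = true)).card *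
        (1 - ρ) ^ (Finset.univ.filter (fun i => w i = false)).card)
      = ∑ w ∈ Finset.univ.filter
          (fun w : Fin n → Bool => mAdmissible m (List.ofFn w)),
          ρ ^ onesC w * (1 - ρ) ^ (n - onesC w) := by
    refine Finset.sum_congr rfl (fun w _ => ?_)
    rw [zeros_card w]
    rfl
  rw [step1]
  -- Step 2: group by number of ones
  rw [← Finset.sum_fiberwise_of_maps_to (g := onesC) (t := Finset.range (n + 1))
    (fun w _ => Finset.mem_range.2 (Nat.lt_succ_of_le (ones_le w)))
    (fun w => ρ ^ onesC w * (1 - ρ) ^ (n - onesC w))]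
  -- Step 3: evaluate the inner sums
  have inner : ∀ k ∈ Finset.range (n + 1),
      (∑ w ∈ (Finset.univ.filter
          (fun w : Fin n → Bool => mAdmissible m (List.ofFn w))).filter
          (fun w => onesC w = k),
        ρ ^ onesC w * (1 - ρ) ^ (n - onesC w))
      = (((Finset.univ.filter (fun w : Fin n → Bool => onesC w = k)).filter
          (fun w => mAdmissible m (List.ofFn w))).card : ℝ)
          * (ρ ^ k * (1 - ρ) ^ (n - k)) := by
    intro k _
    have hcomm : (Finset.univ.filter
          (fun w : Fin n → Bool => mAdmissible m (List.ofFn w))).filter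
          (fun w => onesC w = k)
        = (Finset.univ.filter (fun w : Fin n → Bool => onesC w = k)).filter
          (fun w => mAdmissible m (List.ofFn w)) := by
      rw [Finset.filter_filter, Finset.filter_filter]
      apply Finset.filter_congr
      intro w _
      exact and_comm
    calc (∑ w ∈ (Finset.univ.filter
          (fun w : Fin n → Bool => mAdmissible m (List.ofFn w))).filter
          (fun w => onesC w = k),
        ρ ^ onesC w * (1 - ρ) ^ (n - onesC w))
        = ∑ _w ∈ (Finset.univ.filter
            (fun w : Fin n → Bool => mAdmissible m (List.ofFn w))).filter
            (fun w => onesC w = k), ρ ^ k * (1 - ρ) ^ (n - k) := by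
          refine Finset.sum_congr rfl (fun w hw => ?_)
          rw [(Finset.mem_filter.1 hw).2]
      _ = _ := by rw [hcomm, Finset.sum_const, nsmul_eq_mul]
  rw [Finset.sum_congr rfl inner]
  -- Step 4: terms with more than t ones vanish
  have hsub : Finset.range (t + 1) ⊆ Finset.range (n + 1) := by
    apply Finset.range_subset_range.2
    have : t + 1 ≤ (m + 1) * (t + 1) := Nat.le_mul_of_pos_left _ (by omega)
    omega
  rw [← Finset.sum_subset hsub (fun k hk1 hk2 => ?_)]
  swap
  · have hk : n ≤ (m + 1) * k := by
      simp only [Finset.mem_range] at hk1 hk2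
      have h1 : t + 1 ≤ k := by omega
      calc n = (m + 1) * (t + 1) := hndef
        _ ≤ (m + 1) * k := Nat.mul_le_mul_left _ h1
    rw [count_empty m k hk]
    simp
  -- Step 5: reindex and compute
  refine Finset.sum_bij' (fun k _ => t + 1 - k) (fun j _ => t + 1 - j) ?_ ?_ ?_ ?_ ?_
  · intro k hk
    simp only [Finset.mem_range] at hk
    simp only [Finset.mem_Icc]
    omega
  · intro j hj
    simp only [Finset.mem_Icc] at hj
    simp only [Finset.mem_range]
    omega
  · intro k hk
    simp only [Finset.mem_range] at hk
    show t + 1 - (t + 1 - k) = k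
    omega
  · intro j hj
    simp only [Finset.mem_Icc] at hj
    show t + 1 - (t + 1 - j) = j
    omega
  · intro k hk
    simp only [Finset.mem_range] at hk
    have e1 : t + 1 - (t + 1 - k) = k := by omega
    have e2 : m * (t + 1) + (t + 1 - k) = n - k := by
      have h : n = m * (t + 1) + (t + 1) := by rw [hndef]; ring
      omega
    rw [e1, e2]
    have hk' : (m + 1) * k < n := by
      rw [hndef]
      exact mul_lt_mul_of_pos_left (by omega : k < t + 1) (by omega : 0 < m + 1)
    set c := (((Finset.univ.filter (fun w : Fin n → Bool => onesC w = k)).filter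
        (fun w => mAdmissible m (List.ofFn w))).card) with hcdef
    have hc := count_k m k hk'
    rw [← hcdef] at hc
    have h3 : n - (m + 1) * k = (m + 1) * (t + 1 - k) := by
      have h4 : (m + 1) * (t + 1) = (m + 1) * k + (m + 1) * (t + 1 - k) := by
        rw [← Nat.mul_add, Nat.add_sub_cancel' (by omega : k ≤ t + 1)]
      omega
    rw [h3] at hc
    have hnR : (n : ℝ) = ((m : ℝ) + 1) * ((t : ℝ) + 1) := by
      rw [hndef]; push_cast; ring
    have ht1 : ((t : ℝ) + 1) ≠ 0 := by positivity
    have hm1 : ((m : ℝ) + 1) ≠ 0 := by positivity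
    have hcR : ((m : ℝ) + 1) * ((t : ℝ) + 1) * (c : ℝ)
        = ((m : ℝ) + 1) * ((t + 1 - k : ℕ) : ℝ) * (Nat.choose n k : ℝ) := by
      have h6 := congrArg (fun x : ℕ => (x : ℝ)) hc
      push_cast at h6
      rw [hnR] at h6
      linarith
    have h5 : ((t : ℝ) + 1) * (c : ℝ)
        = ((t + 1 - k : ℕ) : ℝ) * (Nat.choose n k : ℝ) := by
      apply mul_left_cancel₀ hm1
      calc ((m:ℝ)+1) * (((t:ℝ)+1) * (c:ℝ)) = ((m:ℝ)+1)*((t:ℝ)+1)*(c:ℝ) := by ring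
        _ = ((m:ℝ)+1) * ((t + 1 - k : ℕ):ℝ) * (Nat.choose n k : ℝ) := hcR
        _ = ((m:ℝ)+1) * (((t + 1 - k : ℕ):ℝ) * (Nat.choose n k : ℝ)) := by ring
    have hcard : (c : ℝ)
        = ((t + 1 - k : ℕ) : ℝ) / ((t : ℝ) + 1) * (Nat.choose n k : ℝ) := by
      rw [div_mul_eq_mul_div, eq_div_iff ht1]
      linarith
    rw [hcard]
    push_cast
    ring
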